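/- Let G be a graph, S a subset of vertices, and C a connected component of G with more than 3n/4 vertices, where n = |V(G)|. If no connected component of G - S has more than n/2 vertices, then for two vertices a, b chosen independently and uniformly at random from C, the probability that a and b lie in different connected components of G - S (or at least one of them lies in S) is at least 1/3. -/

import Mathlib

/-- The graph obtained from `G` by deleting the vertices of `S`
(deleted vertices become isolated). -/
def removeVerts {V : Type*} (G : SimpleGraph V) (S : Set V) : SimpleGraph V where
  Adj u w := G.Adj u w ∧ u ∉ S ∧ w ∉ S
  symm := ⟨fun u w h => ⟨h.1.symm, h.2.2, h.2.1⟩⟩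
  loopless := ⟨fun u h => G.loopless.irrefl u h.1⟩

/-- If `C` is a connected component of `G` with more than `3n/4` vertices and no component
of `G - S` has more than `n/2` vertices, then for `a, b` chosen uniformly at random from
`C`, the probability that `a` and `b` lie in different components of `G - S` (or at least
one of them lies in `S`) is at least `1/3`; stated by counting pairs. -/
theorem random_pair_separated_with_prob_one_third {V : Type*} [Fintype V]
    (G : SimpleGraph V) (S C : Set V)
    (hC : ∃ v : V, C = {u : V | G.Reachable u v})
    (hCbig : 3 * Fintype.card V < 4 * C.ncard)
    (hsep : ∀ v : V, v ∉ S →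
      2 * {u : V | (removeVerts G S).Reachable u v}.ncard ≤ Fintype.card V) :
    C.ncard ^ 2 ≤ 3 * {p : V × V | p.1 ∈ C ∧ p.2 ∈ C ∧
      (p.1 ∈ S ∨ p.2 ∈ S ∨ ¬ (removeVerts G S).Reachable p.1 p.2)}.ncard := by
  classical
  have : Finite V := Finite.of_fintype V
  set n := Fintype.card V with hn
  set c := C.ncard with hc
  set A := {p : V × V | p.1 ∈ C ∧ p.2 ∈ C ∧
      (p.1 ∈ S ∨ p.2 ∈ S ∨ ¬ (removeVerts G S).Reachable p.1 p.2)} with hA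
  set B := {p : V × V | p.1 ∈ C ∧ p.2 ∈ C ∧ p.1 ∉ S ∧ p.2 ∉ S ∧
      (removeVerts G S).Reachable p.1 p.2} with hB
  have hAfin : A.Finite := Set.toFinite A
  have hBfin : B.Finite := Set.toFinite B
  have hCfin : C.Finite := Set.toFinite C
  -- split the product
  have hsplit : C ×ˢ C = A ∪ B := by
    ext ⟨x, y⟩
    simp only [Set.mem_prod, hA, hB, Set.mem_union, Set.mem_setOf_eq]
    tauto
  have hdisj : Disjoint A B := by
    rw [Set.disjoint_left]
    intro p hpA hpB
    simp only [hA, hB, Set.mem_setOf_eq] at hpA hpB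
    tauto
  have hprod : (C ×ˢ C).ncard = c * c := by
    rw [Set.ncard_eq_toFinset_card _ (hCfin.prod hCfin)]
    have : (hCfin.prod hCfin).toFinset = hCfin.toFinset ×ˢ hCfin.toFinset := by
      ext p
      simp only [Set.Finite.mem_toFinset, Finset.mem_product]
      exact Iff.rfl
    rw [this, Finset.card_product, hc, Set.ncard_eq_toFinset_card _ hCfin]
  have hsum : c * c = A.ncard + B.ncard := by
    rw [← hprod, hsplit, Set.ncard_union_eq hdisj hAfin hBfin]
  -- bound B
  set CF := hCfin.toFinset with hCF
  set BF := hBfin.toFinset with hBF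
  have hfib : BF.card = ∑ a ∈ CF, (BF.filter (fun p => p.1 = a)).card := by
    apply Finset.card_eq_sum_card_fiberwise
    intro p hp
    change p ∈ hBfin.toFinset at hp
    simp only [hBF, Set.Finite.mem_toFinset, hB, Set.mem_setOf_eq] at hp
    simp only [hCF, Finset.mem_coe, Set.Finite.mem_toFinset]
    exact hp.1
  have fiber_bound : ∀ a ∈ CF, 2 * (BF.filter (fun p => p.1 = a)).card ≤ n := by
    intro a _
    by_cases haS : a ∈ S
    · have : BF.filter (fun p => p.1 = a) = ∅ := by
        apply Finset.eq_empty_of_forall_notMem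
        intro p hp
        simp only [Finset.mem_filter, hBF, Set.Finite.mem_toFinset, hB,
          Set.mem_setOf_eq] at hp
        exact hp.1.2.2.1 (hp.2 ▸ haS)
      rw [this]
      simp only [Finset.card_empty]
      omega
    · have hRfin : {u : V | (removeVerts G S).Reachable u a}.Finite := Set.toFinite _
      have himg : (BF.filter (fun p => p.1 = a)).image Prod.snd ⊆ hRfin.toFinset := by
        intro b hb
        simp only [Finset.mem_image, Finset.mem_filter, hBF,
          Set.Finite.mem_toFinset, hB, Set.mem_setOf_eq] at hb
        obtain ⟨p, ⟨hpB, hpa⟩, hpb⟩ := hb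
        simp only [Set.Finite.mem_toFinset, Set.mem_setOf_eq]
        exact (hpb ▸ hpa ▸ hpB.2.2.2.2).symm
      have hinj : (BF.filter (fun p => p.1 = a)).card
          = ((BF.filter (fun p => p.1 = a)).image Prod.snd).card := by
        rw [Finset.card_image_of_injOn]
        intro p hp q hq hpq
        simp only [Finset.coe_filter, Set.mem_setOf_eq] at hp hq
        exact Prod.ext (hp.2.trans hq.2.symm) hpq
      have hcard : (BF.filter (fun p => p.1 = a)).card
          ≤ {u : V | (removeVerts G S).Reachable u a}.ncard := by
        rw [hinj, Set.ncard_eq_toFinset_card _ hRfin]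
        exact Finset.card_le_card himg
      have := hsep a haS
      omega
  have hBbound : 2 * B.ncard ≤ c * n := by
    have h1 : 2 * BF.card ≤ ∑ _a ∈ CF, n := by
      rw [hfib, Finset.mul_sum]
      exact Finset.sum_le_sum fiber_bound
    have h2 : ∑ _a ∈ CF, n = c * n := by
      rw [Finset.sum_const, smul_eq_mul, hc, Set.ncard_eq_toFinset_card _ hCfin]
    have h3 : B.ncard = BF.card := Set.ncard_eq_toFinset_card _ hBfin
    omega
  -- final arithmetic
  have hcn : 3 * n + 1 ≤ 4 * c := hCbig
  have hkey : 3 * n * c < 4 * c * c := by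
    have hcpos : 0 < c := by omega
    have h4 : (3 * n + 1) * c ≤ 4 * c * c := Nat.mul_le_mul_right c hcn
    nlinarith
  have : 3 * B.ncard ≤ 2 * (c * c) := by nlinarith [hBbound, hkey]
  have : c ^ 2 = c * c := sq c
  nlinarith [hsum]
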